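/- Let C be an additive idempotent complete category with weak kernels and weak cokernels. Then C has n-kernels if and only if C has n-cokernels. -/

import Mathlib

open CategoryTheory CategoryTheory.Limits

namespace Paper


variable {C : Type*} [Category C] [Preadditive C]

/-- Exactness of the sequence of contravariant representable functors at interior position `i`. -/
def YExactAt {m : ℕ} (T : ComposableArrows C m) (i : ℕ) (h : i + 2 ≤ m) : Prop :=
  T.map' i (i+1) (by omega) (by omega) ≫ T.map' (i+1) (i+2) (by omega) h = 0 ∧
  ∀ (W : C) (u : W ⟶ T.obj' (i+1) (by omega)),
    u ≫ T.map' (i+1) (i+2) (by omega) h = 0 →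
      ∃ v : W ⟶ T.obj' i (by omega), v ≫ T.map' i (i+1) (by omega) (by omega) = u

/-- Exactness of the sequence of covariant representable functors at interior position `i`. -/
def CoYExactAt {m : ℕ} (T : ComposableArrows C m) (i : ℕ) (h : i + 2 ≤ m) : Prop :=
  T.map' i (i+1) (by omega) (by omega) ≫ T.map' (i+1) (i+2) (by omega) h = 0 ∧
  ∀ (W : C) (u : T.obj' (i+1) (by omega) ⟶ W),
    T.map' i (i+1) (by omega) (by omega) ≫ u = 0 →
      ∃ v : T.obj' (i+2) h ⟶ W, T.map' (i+1) (i+2) (by omega) h ≫ v = u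

/-- `T = [X_n → ⋯ → X_1 → X → Y]` is such that `X_n → ⋯ → X` is an `n`-kernel of the
last map `X ⟶ Y`, i.e. `0 → C(-,X_n) → ⋯ → C(-,X) → C(-,Y)` is exact. -/
def IsNKernelSeq (n : ℕ) (T : ComposableArrows C (n+1)) : Prop :=
  Mono (T.map' 0 1 (by omega) (by omega)) ∧ ∀ (i : ℕ) (h : i + 2 ≤ n + 1), YExactAt T i h

/-- `T = [X → Y → Y_1 → ⋯ → Y_n]` is such that `Y → ⋯ → Y_n` is an `n`-cokernel of the
first map `X ⟶ Y`, i.e. `0 → C(Y_n,-) → ⋯ → C(Y,-) → C(X,-)` is exact. -/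
def IsNCokernelSeq (n : ℕ) (T : ComposableArrows C (n+1)) : Prop :=
  Epi (T.map' n (n+1) (by omega) (by omega)) ∧ ∀ (i : ℕ) (h : i + 2 ≤ n + 1), CoYExactAt T i h

/-- `T` is an `n`-exact sequence. -/
def IsNExactSeq (n : ℕ) (T : ComposableArrows C (n+1)) : Prop :=
  IsNKernelSeq n T ∧ IsNCokernelSeq n T

/-- The category `C` has `n`-kernels. -/
def HasNKernels (C : Type*) [Category C] [Preadditive C] (n : ℕ) : Prop :=
  ∀ ⦃X Y : C⦄ (f : X ⟶ Y), ∃ (T : ComposableArrows C (n+1))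
    (hX : T.obj' n (by omega) = X) (hY : T.obj' (n+1) (by omega) = Y),
      T.map' n (n+1) (by omega) (by omega) = eqToHom hX ≫ f ≫ eqToHom hY.symm ∧
      IsNKernelSeq n T

/-- The category `C` has `n`-cokernels. -/
def HasNCokernels (C : Type*) [Category C] [Preadditive C] (n : ℕ) : Prop :=
  ∀ ⦃X Y : C⦄ (f : X ⟶ Y), ∃ (T : ComposableArrows C (n+1))
    (hX : T.obj' 0 (by omega) = X) (hY : T.obj' 1 (by omega) = Y),
      T.map' 0 1 (by omega) (by omega) = eqToHom hX ≫ f ≫ eqToHom hY.symm ∧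
      IsNCokernelSeq n T

/-- Axiom (A2): every monomorphism, together with any of its `n`-cokernels, forms an
`n`-exact sequence. -/
def AxiomA2 (C : Type*) [Category C] [Preadditive C] (n : ℕ) : Prop :=
  ∀ (T : ComposableArrows C (n+1)), Mono (T.map' 0 1 (by omega) (by omega)) →
    IsNCokernelSeq n T → IsNExactSeq n T

/-- Axiom (A2ᵒᵖ): every epimorphism, together with any of its `n`-kernels, forms an
`n`-exact sequence. -/
def AxiomA2op (C : Type*) [Category C] [Preadditive C] (n : ℕ) : Prop :=
  ∀ (T : ComposableArrows C (n+1)), Epi (T.map' n (n+1) (by omega) (by omega)) →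
    IsNKernelSeq n T → IsNExactSeq n T

/-- Jasso's axioms for an `n`-abelian category. -/
def IsNAbelian (C : Type*) [Category C] [Preadditive C] (n : ℕ) : Prop :=
  HasNKernels C n ∧ HasNCokernels C n ∧ AxiomA2 C n ∧ AxiomA2op C n

/-- `C` has weak kernels. -/
def HasWeakKernelsP (C : Type*) [Category C] [Preadditive C] : Prop :=
  ∀ ⦃Y Z : C⦄ (g : Y ⟶ Z), ∃ (X : C) (f : X ⟶ Y), f ≫ g = 0 ∧
    ∀ ⦃W : C⦄ (u : W ⟶ Y), u ≫ g = 0 → ∃ v : W ⟶ X, v ≫ f = u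

/-- `C` has weak cokernels. -/
def HasWeakCokernelsP (C : Type*) [Category C] [Preadditive C] : Prop :=
  ∀ ⦃X Y : C⦄ (f : X ⟶ Y), ∃ (Z : C) (g : Y ⟶ Z), f ≫ g = 0 ∧
    ∀ ⦃W : C⦄ (u : Y ⟶ W), f ≫ u = 0 → ∃ v : Z ⟶ W, g ≫ v = u

/-- A category is von Neumann regular if every morphism factors as a split epimorphism
followed by a split monomorphism. -/
def VonNeumannRegular (C : Type*) [Category C] : Prop :=
  ∀ ⦃X Y : C⦄ (f : X ⟶ Y), ∃ (W : C) (p : X ⟶ W) (j : W ⟶ Y),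
    IsSplitEpi p ∧ IsSplitMono j ∧ p ≫ j = f

end Paper

open Paper

section Star
variable {C : Type*} [Category C] [Preadditive C]

lemma exists_wkChain (hwk : HasWeakKernelsP C) {X Y : C} (f : X ⟶ Y) :
    ∃ (A : ℕ → C) (k : ∀ i, A (i+1) ⟶ A i) (hA0 : A 0 = Y) (hA1 : A 1 = X),
      (k 0 = eqToHom hA1 ≫ f ≫ eqToHom hA0.symm) ∧
      (∀ i, k (i+1) ≫ k i = 0) ∧
      (∀ i ⦃U : C⦄ (u : U ⟶ A (i+1)), u ≫ k i = 0 → ∃ v : U ⟶ A (i+2), v ≫ k (i+1) = u) := by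
  let F : ℕ → Σ' (P Q : C), P ⟶ Q := fun i =>
    Nat.rec ⟨X, Y, f⟩ (fun _ p => ⟨(hwk p.2.2).choose, p.1, (hwk p.2.2).choose_spec.choose⟩) i
  refine ⟨fun i => (F i).2.1, fun i => (F i).2.2, rfl, rfl,
    by rw [eqToHom_refl, eqToHom_refl, Category.comp_id, Category.id_comp]; rfl, ?_, ?_⟩
  · intro i
    exact (hwk (F i).2.2).choose_spec.choose_spec.1
  · intro i U u hu
    exact (hwk (F i).2.2).choose_spec.choose_spec.2 u hu

lemma star_ker {n : ℕ} (hco : HasNCokernels C n) (A : ℕ → C) (k : ∀ i, A (i+1) ⟶ A i)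
    (hzero : ∀ i, k (i+1) ≫ k i = 0)
    (hexact : ∀ i ⦃U : C⦄ (u : U ⟶ A (i+1)), u ≫ k i = 0 → ∃ v : U ⟶ A (i+2), v ≫ k (i+1) = u) :
    ∃ t : A (n+1) ⟶ A (n+2), k (n+1) ≫ t ≫ k (n+1) = k (n+1) := by
  obtain ⟨T, hX, hY, hmap, hepi, hex⟩ := hco (k (n+1))
  have W : ∀ m j (hj : j + m = n) (c : T.obj' (j+1) (by omega) ⟶ A (m+1)),
      T.map' j (j+1) (by omega) (by omega) ≫ c ≫ k m = 0 →
      ∃ d : T.obj' (j+1) (by omega) ⟶ A (m+2),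
        T.map' j (j+1) (by omega) (by omega) ≫ c
          = T.map' j (j+1) (by omega) (by omega) ≫ d ≫ k (m+1) := by
    intro m
    induction m with
    | zero =>
      intro j hj c hc
      have hj' : j = n := by omega
      subst hj'
      haveI := hepi
      have hc0 : c ≫ k 0 = 0 := by
        apply (cancel_epi (T.map' j (j+1) _ _)).mp
        rw [comp_zero]
        exact hc
      obtain ⟨d, hd⟩ := hexact 0 c hc0
      exact ⟨d, by rw [hd]⟩
    | succ m ih =>
      intro j hj c hc
      obtain ⟨hz, hfac⟩ := hex j (by omega)
      obtain ⟨c', hc'⟩ := hfac _ (c ≫ k (m+1)) hc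
      obtain ⟨d', hd'⟩ : ∃ d' : T.obj' (j+2) (by omega) ⟶ A (m+2),
          T.map' (j+1) (j+2) (by omega) (by omega) ≫ c'
            = T.map' (j+1) (j+2) (by omega) (by omega) ≫ d' ≫ k (m+1) :=
        ih (j+1) (by omega) c' (by
          rw [← Category.assoc, hc', Category.assoc, hzero m, comp_zero])
      have he : (c - T.map' (j+1) (j+2) (by omega) (by omega) ≫ d') ≫ k (m+1) = 0 := by
        rw [Preadditive.sub_comp, Category.assoc, ← hd', hc', sub_self]
      obtain ⟨d, hd⟩ := hexact (m+1) _ he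
      refine ⟨d, ?_⟩
      have hce : c = d ≫ k (m+2) + T.map' (j+1) (j+2) (by omega) (by omega) ≫ d' := by
        rw [hd]; abel
      rw [hce, Preadditive.comp_add]
      simp only [← Category.assoc]
      rw [hz, zero_comp, add_zero]
  obtain ⟨d, hd⟩ := W n 0 (by omega) (eqToHom hY) (by
    rw [hmap]
    simp only [Category.assoc, eqToHom_trans_assoc, eqToHom_refl, Category.id_comp,
      eqToHom_trans]
    rw [hzero, comp_zero])
  refine ⟨eqToHom hY.symm ≫ d, ?_⟩
  rw [hmap] at hd
  simp only [Category.assoc, eqToHom_trans_assoc, eqToHom_refl, Category.id_comp,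
    Category.comp_id, eqToHom_trans] at hd
  have h2 := (cancel_epi (eqToHom hX)).mp hd.symm
  exact (congrArg (fun q => k (n+1) ≫ q) (Category.assoc (eqToHom hY.symm) d (k (n+1)))).trans h2

lemma star_coker {n : ℕ} (hker : HasNKernels C n) (A : ℕ → C) (g : ∀ i, A i ⟶ A (i+1))
    (hzero : ∀ i, g i ≫ g (i+1) = 0)
    (hexact : ∀ i ⦃U : C⦄ (u : A (i+1) ⟶ U), g i ≫ u = 0 → ∃ v : A (i+2) ⟶ U, g (i+1) ≫ v = u) :
    ∃ t : A (n+2) ⟶ A (n+1), g (n+1) ≫ t ≫ g (n+1) = g (n+1) := by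
  obtain ⟨T, hX, hY, hmap, hmono, hex⟩ := hker (g (n+1))
  have W : ∀ m (hm : m ≤ n) (c : A (m+1) ⟶ T.obj' m (by omega)),
      g m ≫ c ≫ T.map' m (m+1) (by omega) (by omega) = 0 →
      ∃ d : A (m+2) ⟶ T.obj' m (by omega),
        c ≫ T.map' m (m+1) (by omega) (by omega)
          = g (m+1) ≫ d ≫ T.map' m (m+1) (by omega) (by omega) := by
    intro m
    induction m with
    | zero =>
      intro hm c hc
      haveI := hmono
      have hc0 : g 0 ≫ c = 0 := by
        apply (cancel_mono (T.map' 0 1 _ _)).mp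
        rw [zero_comp, Category.assoc]
        exact hc
      obtain ⟨d, hd⟩ := hexact 0 c hc0
      exact ⟨d, by rw [← hd, Category.assoc]⟩
    | succ m ih =>
      intro hm c hc
      obtain ⟨hz, hfac⟩ := hex m (by omega)
      obtain ⟨c', hc'⟩ := hfac _ (g (m+1) ≫ c) (by
        rw [Category.assoc]; exact hc)
      obtain ⟨d', hd'⟩ := ih (by omega) c' (by
        rw [hc', ← Category.assoc, hzero m, zero_comp])
      have he : g (m+1) ≫ (c - d' ≫ T.map' m (m+1) (by omega) (by omega)) = 0 := by
        rw [Preadditive.comp_sub, ← hd', hc', sub_self]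
      obtain ⟨d, hd⟩ := hexact (m+1) _ he
      refine ⟨d, ?_⟩
      have hce : c = g (m+2) ≫ d + d' ≫ T.map' m (m+1) (by omega) (by omega) := by
        rw [hd]; abel
      rw [hce, Preadditive.add_comp, Category.assoc, Category.assoc, hz, comp_zero,
        add_zero, ← Category.assoc]
  obtain ⟨d, hd⟩ := W n (by omega) (eqToHom hX.symm) (by
    rw [hmap]
    simp only [Category.assoc, eqToHom_trans_assoc, eqToHom_refl, Category.id_comp]
    rw [← Category.assoc, hzero n, zero_comp])
  refine ⟨d ≫ eqToHom hX, ?_⟩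
  rw [hmap] at hd
  simp only [Category.assoc, eqToHom_trans_assoc, eqToHom_refl, Category.id_comp] at hd
  have h3 := congrArg (fun q => q ≫ eqToHom hY) hd
  simp only [Category.assoc, eqToHom_trans, eqToHom_refl, Category.comp_id] at h3
  simpa [Category.assoc] using h3.symm

theorem hasNKernels_of_hasNCokernels [IsIdempotentComplete C] (hwk : HasWeakKernelsP C)
    {n : ℕ} (hn : 1 ≤ n) (hco : HasNCokernels C n) : HasNKernels C n := by
  obtain ⟨N, rfl⟩ : ∃ N, n = N + 1 := ⟨n - 1, by omega⟩
  intro X Y f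
  obtain ⟨A, k, hA0, hA1, hk0, hzero, hexact⟩ := exists_wkChain hwk f
  obtain ⟨t, ht⟩ := star_ker hco A k hzero hexact
  -- split the idempotent 𝟙 - t ≫ k (N+2)
  have hππ : (𝟙 (A (N+2)) - t ≫ k (N+2)) ≫ (𝟙 (A (N+2)) - t ≫ k (N+2))
      = 𝟙 (A (N+2)) - t ≫ k (N+2) := by
    have h1 : (t ≫ k (N+2)) ≫ t ≫ k (N+2) = t ≫ k (N+2) := by
      rw [Category.assoc, ht]
    rw [Preadditive.sub_comp, Category.id_comp, Preadditive.comp_sub, Category.comp_id,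
      h1, sub_self, sub_zero]
  obtain ⟨W, i, e, hie, hei⟩ := IsIdempotentComplete.idempotents_split (A (N+2)) _ hππ
  have hπk : (t ≫ k (N+2)) ≫ k (N+1) = 0 := by
    rw [Category.assoc, hzero, comp_zero]
  have hew : e ≫ i ≫ k (N+1) = k (N+1) := by
    rw [← Category.assoc, hei, Preadditive.sub_comp, Category.id_comp, hπk, sub_zero]
  have hke : k (N+2) ≫ e = 0 := by
    have h2 : k (N+2) ≫ (𝟙 (A (N+2)) - t ≫ k (N+2)) = 0 := by
      rw [Preadditive.comp_sub, Category.comp_id, ht, sub_self]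
    have h4 : k (N+2) ≫ e = (k (N+2) ≫ (e ≫ i)) ≫ e := by
      rw [Category.assoc, Category.assoc, hie, Category.comp_id]
    rw [h4, hei, h2, zero_comp]
  have hwmono : Mono (i ≫ k (N+1)) := by
    rw [Preadditive.mono_iff_cancel_zero]
    intro Z v hv
    obtain ⟨z, hz⟩ := hexact (N+1) (v ≫ i) (by rw [Category.assoc]; exact hv)
    have h6 : v ≫ i ≫ e = 0 := by
      rw [← Category.assoc, ← hz, Category.assoc, hke, comp_zero]
    rw [hie, Category.comp_id] at h6
    exact h6
  have hwzero : (i ≫ k (N+1)) ≫ k N = 0 := by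
    rw [Category.assoc, hzero, comp_zero]
  have hwfac : ∀ ⦃U : C⦄ (u : U ⟶ A (N+1)), u ≫ k N = 0 →
      ∃ v : U ⟶ W, v ≫ i ≫ k (N+1) = u := by
    intro U u hu
    obtain ⟨v0, hv0⟩ := hexact N u hu
    exact ⟨v0 ≫ e, by rw [Category.assoc, hew, hv0]⟩
  -- assemble the composable arrows
  let obj : Fin (N+3) → C := fun s => Nat.casesOn s.1 W (fun l => A (N+1-l))
  let mapSucc : ∀ (s : Fin (N+2)), obj s.castSucc ⟶ obj s.succ := fun s =>
    Fin.cases (motive := fun s => obj s.castSucc ⟶ obj s.succ) (i ≫ k (N+1))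
      (fun p => eqToHom (congrArg A (by omega : N+1-p.1 = (N-p.1)+1)) ≫ k (N-p.1) ≫
        eqToHom (congrArg A (by omega : N-p.1 = N+1-(p.1+1)))) s
  let T : ComposableArrows C (N+2) := ComposableArrows.mkOfObjOfMapSucc obj mapSucc
  have hm0 : T.map' 0 1 (by omega) (by omega) = i ≫ k (N+1) :=
    (ComposableArrows.mkOfObjOfMapSucc_map_succ obj mapSucc 0 (by omega)).trans
      Fin.cases_zero
  have hmS : ∀ (l : ℕ) (hl : l ≤ N) (a : ℕ) (ha : a = N - l)
      (h1 : A (N+1-l) = A (a+1)) (h2 : A a = A (N+1-(l+1))),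
      T.map' (l+1) (l+2) (by omega) (by omega) = eqToHom h1 ≫ k a ≫ eqToHom h2 := by
    intro l hl a ha h1 h2
    subst ha
    exact (ComposableArrows.mkOfObjOfMapSucc_map_succ obj mapSucc (l+1) (by omega)).trans
      (Fin.cases_succ' (by omega))
  -- the zero-composition helper
  have HZ : ∀ (a b : ℕ) (hab : a = b + 1) (h : A a = A (b+1)) {V : C} (v : A b ⟶ V),
      k a ≫ eqToHom h ≫ k b ≫ v = 0 := by
    rintro a b rfl h V v
    rw [eqToHom_refl, Category.id_comp, ← Category.assoc, hzero, zero_comp]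
  -- objects at the end
  have hXo : T.obj' (N+1) (by omega) = X := (congrArg A (by omega : N+1-N = 1)).trans hA1
  have hYo : T.obj' (N+2) (by omega) = Y :=
    (congrArg A (by omega : N+1-(N+1) = 0)).trans hA0
  refine ⟨T, hXo, hYo, ?_, ?_, ?_⟩
  · -- the last map is f
    have h7 := hmS N (by omega) 0 (by omega) (congrArg A (by omega))
      (congrArg A (by omega))
    rw [hk0] at h7
    refine h7.trans ?_
    simp only [Category.assoc, eqToHom_trans, eqToHom_trans_assoc]
    exact rfl
  · -- Mono
    show Mono (T.map' 0 1 (by omega) (by omega))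
    rw [hm0]; exact hwmono
  · -- exactness
    rintro (_|l) h
    · -- i = 0
      have hM' : T.map' (0+1) (0+2) (by omega) (by omega)
          = 𝟙 (A (N+1)) ≫ k N ≫ 𝟙 (A N) :=
        hmS 0 (by omega) N rfl (congrArg A (by omega)) (congrArg A (by omega))
      constructor
      · have : T.map' 0 1 (by omega) (by omega) ≫
            T.map' (0+1) (0+2) (by omega) (by omega) = 0 := by
          rw [hm0, hM', Category.id_comp, Category.comp_id]
          exact hwzero
        exact this
      · intro U u hu
        have hu' : u ≫ T.map' (0+1) (0+2) (by omega) (by omega) = 0 := hu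
        rw [hM', Category.id_comp, Category.comp_id] at hu'
        have hu2 : u ≫ k N = 0 := hu'
        obtain ⟨v, hv⟩ := hwfac u hu2
        have : v ≫ T.map' 0 1 (by omega) (by omega) = u := by rw [hm0]; exact hv
        exact ⟨v, this⟩
    · -- i = l+1
      have hM1 := hmS l (by omega) (N-l) rfl (congrArg A (by omega))
        (congrArg A (by omega))
      have hM2 := hmS (l+1) (by omega) (N-(l+1)) rfl (congrArg A (by omega))
        (congrArg A (by omega))
      constructor
      · have : T.map' (l+1) (l+2) (by omega) (by omega) ≫
            T.map' (l+2) (l+3) (by omega) (by omega) = 0 := by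
          rw [hM1, hM2]
          change @CategoryStruct.comp C _ (A (N+1-l)) (A (N+1-(l+1))) (A (N+1-(l+1+1))) _ _ = 0
          simp only [Category.assoc, eqToHom_trans_assoc]
          rw [HZ (N-l) (N-(l+1)) (by omega), comp_zero]
        exact this
      · intro U u hu
        have hu' : u ≫ T.map' (l+1+1) (l+1+2) (by omega) (by omega) = 0 := hu
        rw [hM2] at hu'
        change @CategoryStruct.comp C _ U (A (N+1-(l+1))) (A (N+1-(l+2))) u _ = 0 at hu'
        obtain ⟨u, rfl⟩ : ∃ u' : U ⟶ A (N+1-(l+1)), u' = u := ⟨u, rfl⟩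
        have hu2 : (u ≫ eqToHom (congrArg A (by omega : N+1-(l+1) = (N-(l+1))+1))) ≫
            k (N-(l+1)) = 0 := by
          have h5 := congrArg
            (fun q => q ≫ eqToHom (congrArg A (by omega : N-(l+1) = N+1-(l+2))).symm) hu'
          simpa only [Category.assoc, eqToHom_trans, eqToHom_refl, Category.comp_id,
            zero_comp] using h5
        obtain ⟨v0, hv0⟩ := hexact (N-(l+1)) _ hu2
        refine ⟨v0 ≫ eqToHom (congrArg A (by omega : (N-(l+1))+2 = N+1-l)), ?_⟩
        have hM1' := hmS l (by omega) ((N-(l+1))+1) (by omega)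
          (congrArg A (by omega)) (congrArg A (by omega))
        have : (v0 ≫ eqToHom (congrArg A (by omega : (N-(l+1))+2 = N+1-l))) ≫
            T.map' (l+1) (l+2) (by omega) (by omega) = u := by
          rw [hM1']
          change @CategoryStruct.comp C _ U (A (N+1-l)) (A (N+1-(l+1))) _ _ = u
          simp only [Category.assoc, eqToHom_trans_assoc, eqToHom_refl, Category.id_comp]
          rw [← Category.assoc, hv0, Category.assoc, eqToHom_trans, eqToHom_refl,
            Category.comp_id]
        exact this

lemma exists_wcChain (hwc : HasWeakCokernelsP C) {X Y : C} (f : X ⟶ Y) :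
    ∃ (A : ℕ → C) (g : ∀ i, A i ⟶ A (i+1)) (hA0 : A 0 = X) (hA1 : A 1 = Y),
      (g 0 = eqToHom hA0 ≫ f ≫ eqToHom hA1.symm) ∧
      (∀ i, g i ≫ g (i+1) = 0) ∧
      (∀ i ⦃U : C⦄ (u : A (i+1) ⟶ U), g i ≫ u = 0 → ∃ v : A (i+2) ⟶ U, g (i+1) ≫ v = u) := by
  let F : ℕ → Σ' (P Q : C), P ⟶ Q := fun i =>
    Nat.rec ⟨X, Y, f⟩ (fun _ p => ⟨p.2.1, (hwc p.2.2).choose, (hwc p.2.2).choose_spec.choose⟩) i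
  refine ⟨fun i => (F i).1, fun i => (F i).2.2, rfl, rfl,
    by rw [eqToHom_refl, eqToHom_refl, Category.comp_id, Category.id_comp]; rfl, ?_, ?_⟩
  · intro i
    exact (hwc (F i).2.2).choose_spec.choose_spec.1
  · intro i U u hu
    exact (hwc (F i).2.2).choose_spec.choose_spec.2 u hu

theorem hasNCokernels_of_hasNKernels [IsIdempotentComplete C] (hwc : HasWeakCokernelsP C)
    {n : ℕ} (hn : 1 ≤ n) (hker : HasNKernels C n) : HasNCokernels C n := by
  obtain ⟨N, rfl⟩ : ∃ N, n = N + 1 := ⟨n - 1, by omega⟩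
  intro X Y f
  obtain ⟨A, g, hA0, hA1, hg0, hzero, hexact⟩ := exists_wcChain hwc f
  obtain ⟨t, ht⟩ := star_coker hker A g hzero hexact
  -- ht : g (N+2) ≫ t ≫ g (N+2) = g (N+2), t : A (N+3) ⟶ A (N+2)
  have hππ : (𝟙 (A (N+2)) - g (N+2) ≫ t) ≫ (𝟙 (A (N+2)) - g (N+2) ≫ t)
      = 𝟙 (A (N+2)) - g (N+2) ≫ t := by
    have h1 : (g (N+2) ≫ t) ≫ g (N+2) ≫ t = g (N+2) ≫ t := by
      simpa only [Category.assoc] using congrArg (fun q => q ≫ t) ht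
    rw [Preadditive.sub_comp, Category.id_comp, Preadditive.comp_sub, Category.comp_id,
      h1, sub_self, sub_zero]
  obtain ⟨W, i, e, hie, hei⟩ := IsIdempotentComplete.idempotents_split (A (N+2)) _ hππ
  have hgq : g (N+1) ≫ (𝟙 (A (N+2)) - g (N+2) ≫ t) = g (N+1) := by
    rw [Preadditive.comp_sub, Category.comp_id, ← Category.assoc, hzero, zero_comp,
      sub_zero]
  have hew : (g (N+1) ≫ e) ≫ i = g (N+1) := by
    rw [Category.assoc, hei, hgq]
  have hig : i ≫ g (N+2) = 0 := by
    have hq : (𝟙 (A (N+2)) - g (N+2) ≫ t) ≫ g (N+2) = 0 := by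
      rw [Preadditive.sub_comp, Category.id_comp, Category.assoc, ht, sub_self]
    have h4 : i ≫ g (N+2) = i ≫ (e ≫ i) ≫ g (N+2) := by
      rw [← Category.assoc, ← Category.assoc, hie, Category.id_comp]
    rw [h4, hei, hq, comp_zero]
  have hwepi : Epi (g (N+1) ≫ e) := by
    rw [Preadditive.epi_iff_cancel_zero]
    intro Z v hv
    obtain ⟨z, hz⟩ := hexact (N+1) (e ≫ v) (by rw [← Category.assoc]; exact hv)
    have h6 : i ≫ e ≫ v = 0 := by
      rw [← hz, ← Category.assoc, hig, zero_comp]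
    rw [← Category.assoc, hie, Category.id_comp] at h6
    exact h6
  have hwzero : g N ≫ g (N+1) ≫ e = 0 := by
    rw [← Category.assoc, hzero, zero_comp]
  have hwfac : ∀ ⦃U : C⦄ (u : A (N+1) ⟶ U), g N ≫ u = 0 →
      ∃ v : W ⟶ U, (g (N+1) ≫ e) ≫ v = u := by
    intro U u hu
    obtain ⟨v0, hv0⟩ := hexact N u hu
    refine ⟨i ≫ v0, ?_⟩
    rw [← Category.assoc, hew, hv0]
  -- assemble
  let obj : Fin (N+3) → C := fun s =>
    Fin.lastCases (motive := fun _ => C) W (fun q => A q.1) s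
  have hOA : ∀ (j : ℕ) (hj : j ≤ N+1), obj ⟨j, by omega⟩ = A j := by
    intro j hj
    exact Fin.lastCases_castSucc (motive := fun _ => C) ⟨j, by omega⟩
  have hOW : obj ⟨N+2, by omega⟩ = W :=
    Fin.lastCases_last (motive := fun _ => C)
  let mapSucc : ∀ (s : Fin (N+2)), obj s.castSucc ⟶ obj s.succ := fun s =>
    Fin.lastCases (motive := fun s => obj s.castSucc ⟶ obj s.succ)
      (eqToHom (hOA (N+1) (by omega)) ≫ (g (N+1) ≫ e) ≫ eqToHom hOW.symm)
      (fun p => eqToHom (hOA p.1 (by omega)) ≫ g p.1 ≫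
        eqToHom (hOA (p.1+1) (by omega)).symm) s
  let T : ComposableArrows C (N+2) := ComposableArrows.mkOfObjOfMapSucc obj mapSucc
  have hm : ∀ (j : ℕ) (hj : j ≤ N),
      T.map' j (j+1) (by omega) (by omega)
        = eqToHom (hOA j (by omega)) ≫ g j ≫ eqToHom (hOA (j+1) (by omega)).symm := by
    intro j hj
    refine (ComposableArrows.mkOfObjOfMapSucc_map_succ obj mapSucc j (by omega)).trans ?_
    exact Fin.lastCases_castSucc (motive := fun s => obj s.castSucc ⟶ obj s.succ)
      ⟨j, by omega⟩
  have hmW : T.map' (N+1) (N+2) (by omega) (by omega)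
      = eqToHom (hOA (N+1) (by omega)) ≫ (g (N+1) ≫ e) ≫ eqToHom hOW.symm := by
    refine (ComposableArrows.mkOfObjOfMapSucc_map_succ obj mapSucc (N+1) (by omega)).trans ?_
    exact Fin.lastCases_last (motive := fun s => obj s.castSucc ⟶ obj s.succ)
  have hXo : T.obj' 0 (by omega) = X := (hOA 0 (by omega)).trans hA0
  have hYo : T.obj' 1 (by omega) = Y := (hOA 1 (by omega)).trans hA1
  refine ⟨T, hXo, hYo, ?_, ?_, ?_⟩
  · -- first map is f
    have h7 := hm 0 (by omega)
    rw [hg0] at h7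
    refine h7.trans ?_
    simp only [Category.assoc, eqToHom_trans, eqToHom_trans_assoc]
    exact rfl
  · -- Epi
    show Epi (T.map' (N+1) (N+2) (by omega) (by omega))
    rw [hmW]
    haveI : Epi (g (N+1) ≫ e) := hwepi
    exact (inferInstance : Epi (eqToHom (hOA (N+1) (by omega)) ≫ (g (N+1) ≫ e) ≫ eqToHom hOW.symm))
  · -- exactness
    intro ii h
    have hiN : ii ≤ N := by omega
    by_cases hi : ii = N
    · subst hi
      constructor
      · have hz : T.map' ii (ii+1) (by omega) (by omega) ≫
            T.map' (ii+1) (ii+2) (by omega) (by omega) = 0 := by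
          rw [hm ii (by omega), hmW]
          change @CategoryStruct.comp C _ (obj ⟨ii, by omega⟩) (obj ⟨ii+1, by omega⟩) (obj ⟨ii+2, by omega⟩) _ _ = 0
          simp only [Category.assoc, eqToHom_trans_assoc, eqToHom_refl, Category.id_comp]
          have h8 : g ii ≫ g (ii+1) ≫ e ≫ eqToHom hOW.symm = 0 := by
            rw [← Category.assoc, ← Category.assoc, hzero, zero_comp, zero_comp]
          rw [h8, comp_zero]
        exact hz
      · intro U u hu
        have hu' : T.map' ii (ii+1) (by omega) (by omega) ≫ u = 0 := hu
        rw [hm ii (by omega)] at hu'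
        change @CategoryStruct.comp C _ (obj ⟨ii, by omega⟩) (obj ⟨ii+1, by omega⟩) U _ u = 0 at hu'
        obtain ⟨u, rfl⟩ : ∃ u' : obj ⟨ii+1, by omega⟩ ⟶ U, u' = u := ⟨u, rfl⟩
        have hu2 : g ii ≫ eqToHom (hOA (ii+1) (by omega)).symm ≫ u = 0 := by
          have h5 := congrArg (fun q => eqToHom (hOA ii (by omega)).symm ≫ q) hu'
          simpa only [Category.assoc, eqToHom_trans_assoc, eqToHom_refl, Category.id_comp,
            comp_zero] using h5
        obtain ⟨v, hv⟩ := hwfac _ hu2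
        refine ⟨eqToHom hOW ≫ v, ?_⟩
        have : T.map' (ii+1) (ii+2) (by omega) (by omega) ≫ eqToHom hOW ≫ v = u := by
          rw [hmW]
          change @CategoryStruct.comp C _ (obj ⟨ii+1, by omega⟩) (obj ⟨ii+2, by omega⟩) U _
            (@CategoryStruct.comp C _ (obj ⟨ii+2, by omega⟩) W U (eqToHom hOW) v) = u
          simp only [Category.assoc, eqToHom_trans_assoc, eqToHom_refl, Category.id_comp]
          have h9 : g (ii + 1) ≫ e ≫ v = eqToHom (hOA (ii+1) (by omega)).symm ≫ u := by
            rw [← Category.assoc]; exact hv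
          rw [h9, eqToHom_trans_assoc, eqToHom_refl, Category.id_comp]
        exact this
    · have hiN' : ii + 1 ≤ N := by omega
      constructor
      · have hz : T.map' ii (ii+1) (by omega) (by omega) ≫
            T.map' (ii+1) (ii+1+1) (by omega) (by omega) = 0 := by
          rw [hm ii (by omega), hm (ii+1) (by omega)]
          change @CategoryStruct.comp C _ (obj ⟨ii, by omega⟩) (obj ⟨ii+1, by omega⟩) (obj ⟨ii+1+1, by omega⟩) _ _ = 0
          simp only [Category.assoc, eqToHom_trans_assoc, eqToHom_refl, Category.id_comp]
          have h8 : g ii ≫ g (ii+1) ≫ eqToHom (hOA (ii+1+1) (by omega)).symm = 0 := by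
            rw [← Category.assoc, hzero, zero_comp]
          rw [h8, comp_zero]
        exact hz
      · intro U u hu
        have hu' : T.map' ii (ii+1) (by omega) (by omega) ≫ u = 0 := hu
        rw [hm ii (by omega)] at hu'
        change @CategoryStruct.comp C _ (obj ⟨ii, by omega⟩) (obj ⟨ii+1, by omega⟩) U _ u = 0 at hu'
        obtain ⟨u, rfl⟩ : ∃ u' : obj ⟨ii+1, by omega⟩ ⟶ U, u' = u := ⟨u, rfl⟩
        have hu2 : g ii ≫ eqToHom (hOA (ii+1) (by omega)).symm ≫ u = 0 := by
          have h5 := congrArg (fun q => eqToHom (hOA ii (by omega)).symm ≫ q) hu'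
          simpa only [Category.assoc, eqToHom_trans_assoc, eqToHom_refl, Category.id_comp,
            comp_zero] using h5
        obtain ⟨v0, hv0⟩ := hexact ii _ hu2
        refine ⟨eqToHom (hOA (ii+1+1) (by omega)) ≫ v0, ?_⟩
        have : T.map' (ii+1) (ii+1+1) (by omega) (by omega) ≫
            eqToHom (hOA (ii+1+1) (by omega)) ≫ v0 = u := by
          rw [hm (ii+1) (by omega)]
          change @CategoryStruct.comp C _ (obj ⟨ii+1, by omega⟩) (obj ⟨ii+1+1, by omega⟩) U _
            (@CategoryStruct.comp C _ (obj ⟨ii+1+1, by omega⟩) (A (ii+1+1)) U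
              (eqToHom (hOA (ii+1+1) (by omega))) v0) = u
          simp only [Category.assoc, eqToHom_trans_assoc, eqToHom_refl, Category.id_comp]
          rw [hv0]
          simp only [eqToHom_trans_assoc, eqToHom_refl, Category.id_comp]
        exact this

end Star

/-- If an additive idempotent complete category has weak kernels and weak cokernels, then
it has `n`-kernels if and only if it has `n`-cokernels. -/
theorem stmt_8 {C : Type*} [Category C] [Preadditive C] [HasZeroObject C]
    [HasFiniteBiproducts C] [IsIdempotentComplete C]
    (hwk : HasWeakKernelsP C) (hwc : HasWeakCokernelsP C) (n : ℕ) (hn : 1 ≤ n) :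
    HasNKernels C n ↔ HasNCokernels C n :=
  ⟨fun hk => hasNCokernels_of_hasNKernels hwc hn hk,
   fun hc => hasNKernels_of_hasNCokernels hwk hn hc⟩
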